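/- The curve r(θ) = (sec((p+1)θ))^{1/(p+1)}, defined for θ ∈ (−π/(2(p+1)), π/(2(p+1))) and p > −1, has zero generalized curvature in the plane with density r^p; equivalently, its image under the coordinate change z ↦ z^{p+1}/(p+1) is a straight line, and r(θ) → ∞ as θ → ±π/(2(p+1)). -/

import Mathlib

open Real Filter

theorem geodesic_in_plane_with_density (p : ℝ) (hp : -1 < p) (r : ℝ → ℝ)
    (hr : ∀ θ, r θ = (1 / Real.cos ((p + 1) * θ)) ^ (1 / (p + 1))) :
    (∀ θ ∈ Set.Ioo (-(π / (2 * (p + 1)))) (π / (2 * (p + 1))),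
      r θ ^ (p + 1) * Real.cos ((p + 1) * θ) = 1) ∧
    Tendsto r (nhdsWithin (π / (2 * (p + 1))) (Set.Iio (π / (2 * (p + 1))))) atTop := by
  have hc : 0 < p + 1 := by linarith
  have heq : (p + 1) * (π / (2 * (p + 1))) = π / 2 := by
    field_simp
  constructor
  · intro θ hθ
    have h1 : (p + 1) * (-(π / (2 * (p + 1)))) < (p + 1) * θ :=
      mul_lt_mul_of_pos_left hθ.1 hc
    have h2 : (p + 1) * θ < (p + 1) * (π / (2 * (p + 1))) :=
      mul_lt_mul_of_pos_left hθ.2 hc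
    have hcos : 0 < Real.cos ((p + 1) * θ) := by
      apply Real.cos_pos_of_mem_Ioo
      constructor
      · calc -(π / 2) = (p + 1) * (-(π / (2 * (p + 1)))) := by rw [mul_neg, heq]
          _ < (p + 1) * θ := h1
      · calc (p + 1) * θ < (p + 1) * (π / (2 * (p + 1))) := h2
          _ = π / 2 := heq
    rw [hr, ← Real.rpow_mul (by positivity), one_div_mul_cancel hc.ne', Real.rpow_one,
      one_div, inv_mul_cancel₀ hcos.ne']
  · -- tendsto part
    have hmap : Tendsto (fun θ => (p + 1) * θ)
        (nhdsWithin (π / (2 * (p + 1))) (Set.Iio (π / (2 * (p + 1)))))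
        (nhdsWithin (π / 2) (Set.Iio (π / 2))) := by
      apply tendsto_nhdsWithin_of_tendsto_nhds_of_eventually_within
      · have h : Tendsto (fun x : ℝ => (p + 1) * x) (nhds (π / (2 * (p + 1)))) (nhds ((p + 1) * (π / (2 * (p + 1))))) := (continuous_const.mul continuous_id : Continuous fun x : ℝ => (p + 1) * x).tendsto (π / (2 * (p + 1)))
        rw [heq] at h
        exact h.mono_left nhdsWithin_le_nhds
      · filter_upwards [self_mem_nhdsWithin] with x hx
        calc (p + 1) * x < (p + 1) * (π / (2 * (p + 1))) := mul_lt_mul_of_pos_left hx hc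
          _ = π / 2 := heq
    have hcos : Tendsto Real.cos (nhdsWithin (π / 2) (Set.Iio (π / 2)))
        (nhdsWithin 0 (Set.Ioi 0)) := by
      apply tendsto_nhdsWithin_of_tendsto_nhds_of_eventually_within
      · have := Real.continuous_cos.tendsto (π / 2)
        simpa using this.mono_left nhdsWithin_le_nhds
      · have hmem : ∀ᶠ x in nhdsWithin (π / 2) (Set.Iio (π / 2)), -(π / 2) < x := by
          apply eventually_nhdsWithin_of_eventually_nhds
          have : (0:ℝ) < π := Real.pi_pos
          exact eventually_gt_nhds (by linarith)
        filter_upwards [hmem, self_mem_nhdsWithin] with x h1 h2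
        exact Real.cos_pos_of_mem_Ioo ⟨h1, h2⟩
    have hinv : Tendsto (fun θ => (Real.cos ((p + 1) * θ))⁻¹)
        (nhdsWithin (π / (2 * (p + 1))) (Set.Iio (π / (2 * (p + 1))))) atTop :=
      tendsto_inv_nhdsGT_zero.comp (hcos.comp hmap)
    have hrpow : Tendsto (fun x : ℝ => x ^ (1 / (p + 1))) atTop atTop :=
      tendsto_rpow_atTop (by positivity)
    have := hrpow.comp hinv
    refine this.congr fun θ => ?_
    simp [hr θ, Function.comp, one_div]
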